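/- arXiv:2203.13503 — 3 statements merged into one kernel-verified Lean document; each statement's English description precedes it below -/
import Mathlib

section
/- Mixture decomposition of the Kullback–Leibler divergence (key identity in the proof of Theorem 4): Let p be a probability measure on a measurable space Z, let Q₁,…,Q_K be probability measures on Z with Q_i ≪ p and KL(Q_i ‖ p) < ∞ for every i, let π₁,…,π_K ≥ 0 with ∑_{i=1}^K π_i = 1, and let Q := ∑_{i=1}^K π_i Q_i. Then KL(Q ‖ p) = ∑_{i=1}^K π_i · KL(Q_i ‖ p) − ∑_{i=1}^K π_i · KL(Q_i ‖ Q); in particular KL(Q ‖ p) ≤ ∑_{i=1}^K π_i · KL(Q_i ‖ p). -/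
open MeasureTheory
open scoped ENNReal

/-- The Kullback–Leibler divergence `KL(μ‖ν) = ∫ log(dμ/dν) dμ` (for `μ ≪ ν`). -/
noncomputable def KLdiv {Z : Type*} [MeasurableSpace Z] (μ ν : Measure Z) : ℝ :=
  ∫ z, Real.log ((μ.rnDeriv ν z).toReal) ∂μ

theorem stmt_9 {Z : Type*} [MeasurableSpace Z]
    (p : Measure Z) [IsProbabilityMeasure p]
    (K : ℕ) (Q : Fin K → Measure Z) (hQprob : ∀ i, IsProbabilityMeasure (Q i))
    (π : Fin K → ℝ) (hπ0 : ∀ i, 0 ≤ π i) (hπsum : ∑ i, π i = 1)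
    (hac : ∀ i, Q i ≪ p)
    -- KL(Q_i ‖ p) < ∞ : the log-density is Q_i-integrable
    (hfin : ∀ i, Integrable (fun z => Real.log (((Q i).rnDeriv p z).toReal)) (Q i)) :
    KLdiv (∑ i, ENNReal.ofReal (π i) • Q i) p
        = (∑ i, π i * KLdiv (Q i) p)
          - ∑ i, π i * KLdiv (Q i) (∑ j, ENNReal.ofReal (π j) • Q j)
      ∧ KLdiv (∑ i, ENNReal.ofReal (π i) • Q i) p ≤ ∑ i, π i * KLdiv (Q i) p := by
  haveI := hQprob
  set ρ : Measure Z := ∑ j, ENNReal.ofReal (π j) • Q j with hρ_def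
  -- ρ is a probability measure
  haveI hρ_prob : IsProbabilityMeasure ρ := by
    constructor
    rw [hρ_def]
    simp only [Measure.coe_finset_sum, Measure.coe_smul, Finset.sum_apply, Pi.smul_apply,
      measure_univ, smul_eq_mul, mul_one]
    rw [← ENNReal.ofReal_sum_of_nonneg (fun i _ => hπ0 i), hπsum, ENNReal.ofReal_one]
  -- ρ ≪ p
  have hρp : ρ ≪ p := by
    intro s hs
    rw [hρ_def]
    simp only [Measure.coe_finset_sum, Measure.coe_smul, Finset.sum_apply, Pi.smul_apply,
      smul_eq_mul]
    refine Finset.sum_eq_zero fun i _ => ?_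
    rw [hac i hs, mul_zero]
  -- the mixture log-density
  set g : Z → ℝ := fun z => Real.log ((ρ.rnDeriv p z).toReal) with hg_def
  -- key facts for each i with π i > 0
  have key : ∀ i, 0 < π i →
      Integrable g (Q i) ∧
      ∫ z, g z ∂(Q i) = KLdiv (Q i) p - KLdiv (Q i) ρ ∧
      0 ≤ KLdiv (Q i) ρ := by
    intro i hπi
    haveI := hQprob i
    -- Q i ≪ ρ
    have hle : ENNReal.ofReal (π i) • Q i ≤ ρ := by
      rw [hρ_def]
      rw [Measure.le_iff]
      intro s hs
      simp only [Measure.coe_finset_sum, Finset.sum_apply]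
      exact Finset.single_le_sum (f := fun j => (ENNReal.ofReal (π j) • Q j) s)
        (fun j _ => zero_le) (Finset.mem_univ i)
    have hQρ : Q i ≪ ρ := by
      intro s hs
      have h1 : (ENNReal.ofReal (π i) • Q i) s = 0 := le_antisymm (hs ▸ hle s) bot_le
      rw [Measure.smul_apply, smul_eq_mul] at h1
      have hne : ENNReal.ofReal (π i) ≠ 0 := by
        simp [ENNReal.ofReal_eq_zero, not_le, hπi]
      exact (mul_eq_zero.mp h1).resolve_left hne
    set f : Z → ℝ := fun z => Real.log (((Q i).rnDeriv p z).toReal) with hf_def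
    set h : Z → ℝ := fun z => Real.log (((Q i).rnDeriv ρ z).toReal) with hh_def
    set u : Z → ℝ := fun z => (ρ.rnDeriv (Q i) z).toReal with hu_def
    -- a.e. basic facts w.r.t. Q i
    have pos_f : ∀ᵐ z ∂(Q i), 0 < (Q i).rnDeriv p z := Measure.rnDeriv_pos (hac i)
    have lt_f : ∀ᵐ z ∂(Q i), (Q i).rnDeriv p z < ∞ :=
      (hac i) (Measure.rnDeriv_lt_top (Q i) p)
    have pos_h : ∀ᵐ z ∂(Q i), 0 < (Q i).rnDeriv ρ z := Measure.rnDeriv_pos hQρ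
    have lt_h : ∀ᵐ z ∂(Q i), (Q i).rnDeriv ρ z < ∞ :=
      hQρ (Measure.rnDeriv_lt_top (Q i) ρ)
    have lt_u : ∀ᵐ z ∂(Q i), ρ.rnDeriv (Q i) z < ∞ := Measure.rnDeriv_lt_top ρ (Q i)
    have chain : ∀ᵐ z ∂(Q i),
        (Q i).rnDeriv ρ z * ρ.rnDeriv p z = (Q i).rnDeriv p z :=
      (hac i) (Measure.rnDeriv_mul_rnDeriv hQρ)
    have inv_h : ∀ᵐ z ∂(Q i), ((Q i).rnDeriv ρ z)⁻¹ = ρ.rnDeriv (Q i) z :=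
      Measure.inv_rnDeriv hQρ
    -- upper bound on rnDeriv (Q i) ρ
    have hbd : ∀ᵐ z ∂ρ, (Q i).rnDeriv ρ z ≤ (ENNReal.ofReal (π i))⁻¹ := by
      have h1 : (ENNReal.ofReal (π i) • Q i).rnDeriv ρ ≤ᵐ[ρ] 1 :=
        Measure.rnDeriv_le_one_of_le hle
      have h2 : (ENNReal.ofReal (π i) • Q i).rnDeriv ρ
          =ᵐ[ρ] ENNReal.ofReal (π i) • (Q i).rnDeriv ρ :=
        Measure.rnDeriv_smul_left_of_ne_top (Q i) ρ ENNReal.ofReal_ne_top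
      filter_upwards [h1, h2] with z hz1 hz2
      rw [hz2] at hz1
      simp only [Pi.smul_apply, smul_eq_mul, Pi.one_apply] at hz1
      rw [ENNReal.le_inv_iff_mul_le, mul_comm]
      exact hz1
    have hbdQ : ∀ᵐ z ∂(Q i), (Q i).rnDeriv ρ z ≤ (ENNReal.ofReal (π i))⁻¹ := hQρ hbd
    -- pointwise bounds on h, a.e. Q i
    have h_upper : ∀ᵐ z ∂(Q i), h z ≤ Real.log (π i)⁻¹ := by
      filter_upwards [hbdQ, pos_h, lt_h] with z hz hzpos hzlt
      have h0 : 0 < ((Q i).rnDeriv ρ z).toReal := ENNReal.toReal_pos hzpos.ne' hzlt.ne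
      refine Real.log_le_log h0 ?_
      have := ENNReal.toReal_mono (by simpa [ENNReal.ofReal_eq_zero, not_le] using hπi) hz
      rwa [ENNReal.toReal_inv, ENNReal.toReal_ofReal hπi.le] at this
    have h_lower : ∀ᵐ z ∂(Q i), 1 - u z ≤ h z := by
      filter_upwards [pos_h, lt_h, inv_h] with z hzpos hzlt hzinv
      have h0 : 0 < ((Q i).rnDeriv ρ z).toReal := ENNReal.toReal_pos hzpos.ne' hzlt.ne
      have hinv0 : 0 < u z := by
        rw [hu_def]
        simp only [← hzinv]
        exact ENNReal.toReal_pos (by simp [hzlt.ne]) (by simp [hzpos.ne'])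
      have huz : u z = (((Q i).rnDeriv ρ z).toReal)⁻¹ := by
        rw [hu_def]
        simp only [← hzinv, ENNReal.toReal_inv]
      have := Real.log_le_sub_one_of_pos hinv0
      rw [huz, Real.log_inv] at this
      rw [huz]
      linarith
    -- u is integrable
    have hu_int : Integrable u (Q i) := by
      refine integrable_toReal_of_lintegral_ne_top
        (Measure.measurable_rnDeriv ρ (Q i)).aemeasurable ?_
      exact (Measure.lintegral_rnDeriv_le.trans_lt (by simp [measure_lt_top])).ne
    -- h is integrable
    have hh_meas : AEStronglyMeasurable h (Q i) :=
      ((Measure.measurable_rnDeriv (Q i) ρ).ennreal_toReal.log).aestronglyMeasurable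
    have hh_int : Integrable h (Q i) := by
      refine Integrable.mono' ((hu_int.norm.add (integrable_const (1 + |Real.log (π i)⁻¹|))))
        hh_meas ?_
      filter_upwards [h_upper, h_lower] with z hz1 hz2
      simp only [Pi.add_apply]
      rw [Real.norm_eq_abs, abs_le]
      constructor
      · have hu' : u z ≤ ‖u z‖ := le_abs_self _
        have := abs_nonneg (Real.log (π i)⁻¹)
        linarith
      · have h3 : h z ≤ |Real.log (π i)⁻¹| := le_trans hz1 (le_abs_self _)
        have := norm_nonneg (u z)
        linarith
    -- ∫ u ≤ 1
    have hu_le : ∫ z, u z ∂(Q i) ≤ 1 := by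
      rw [hu_def, integral_toReal (Measure.measurable_rnDeriv ρ (Q i)).aemeasurable lt_u]
      have h1 : ∫⁻ z, ρ.rnDeriv (Q i) z ∂(Q i) ≤ 1 := by
        refine Measure.lintegral_rnDeriv_le.trans ?_
        simp [measure_univ]
      exact ENNReal.toReal_le_of_le_ofReal zero_le_one (by simpa using h1)
    -- KL(Q i ‖ ρ) = ∫ h ≥ 0
    have hKLρ : KLdiv (Q i) ρ = ∫ z, h z ∂(Q i) := rfl
    have hKL_nonneg : 0 ≤ KLdiv (Q i) ρ := by
      rw [hKLρ]
      have h1 : ∫ z, (1 - u z) ∂(Q i) ≤ ∫ z, h z ∂(Q i) :=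
        integral_mono_ae ((integrable_const (1:ℝ)).sub hu_int) hh_int h_lower
      rw [integral_sub (integrable_const _) hu_int, integral_const] at h1
      simp only [measure_univ, probReal_univ, ENNReal.toReal_one, smul_eq_mul, one_mul, mul_one] at h1
      linarith
    -- g = f - h a.e. Q i
    have hg_eq : g =ᵐ[Q i] fun z => f z - h z := by
      filter_upwards [pos_f, lt_f, pos_h, lt_h, chain,
        (hac i) (Measure.rnDeriv_lt_top ρ p)] with z h1 h2 h3 h4 h5 h6
      have hρp_pos : 0 < ρ.rnDeriv p z := by
        by_contra hcon
        push_neg at hcon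
        have : ρ.rnDeriv p z = 0 := le_antisymm hcon bot_le
        rw [this, mul_zero] at h5
        exact h1.ne' h5.symm
      have hmul : (((Q i).rnDeriv ρ z) * (ρ.rnDeriv p z)).toReal
          = ((Q i).rnDeriv ρ z).toReal * (ρ.rnDeriv p z).toReal := ENNReal.toReal_mul
      have hfz : f z = Real.log (((Q i).rnDeriv ρ z).toReal * (ρ.rnDeriv p z).toReal) := by
        rw [hf_def]
        simp only [← h5, hmul]
      rw [hfz, Real.log_mul (ENNReal.toReal_pos h3.ne' h4.ne).ne'
        (ENNReal.toReal_pos hρp_pos.ne' h6.ne).ne']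
      simp only [hh_def, hg_def]
      ring
    have hg_int : Integrable g (Q i) := by
      refine Integrable.congr (((hfin i).sub hh_int)) hg_eq.symm
    refine ⟨hg_int, ?_, hKL_nonneg⟩
    rw [integral_congr_ae hg_eq, integral_sub (hfin i) hh_int]
    rfl
  -- integrability of g w.r.t. each scaled measure, and value of the integral
  have hint_i : ∀ i, Integrable g (ENNReal.ofReal (π i) • Q i) := by
    intro i
    rcases eq_or_lt_of_le (hπ0 i) with h0 | h0
    · rw [← h0]
      simp only [ENNReal.ofReal_zero, zero_smul]
      exact integrable_zero_measure
    · exact ((key i h0).1).smul_measure ENNReal.ofReal_ne_top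
  have hval_i : ∀ i, ∫ z, g z ∂(ENNReal.ofReal (π i) • Q i)
      = π i * KLdiv (Q i) p - π i * KLdiv (Q i) ρ := by
    intro i
    rcases eq_or_lt_of_le (hπ0 i) with h0 | h0
    · rw [← h0]
      simp only [ENNReal.ofReal_zero, zero_smul, integral_zero_measure, zero_mul, sub_zero]
    · rw [integral_smul_measure, ENNReal.toReal_ofReal (hπ0 i), smul_eq_mul,
        (key i h0).2.1]
      ring
  have hmain : KLdiv ρ p = ∑ i, (π i * KLdiv (Q i) p - π i * KLdiv (Q i) ρ) := by
    have : KLdiv ρ p = ∫ z, g z ∂ρ := rfl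
    rw [this, hρ_def, integral_finset_sum_measure (fun i _ => hint_i i)]
    exact Finset.sum_congr rfl fun i _ => hval_i i
  rw [Finset.sum_sub_distrib] at hmain
  refine ⟨hmain, ?_⟩
  rw [hmain]
  have : 0 ≤ ∑ i, π i * KLdiv (Q i) ρ := by
    refine Finset.sum_nonneg fun i _ => ?_
    rcases eq_or_lt_of_le (hπ0 i) with h0 | h0
    · rw [← h0, zero_mul]
    · exact mul_nonneg h0.le (key i h0).2.2
  linarith
end

section
/- Proposition 2 (forgetting bound for GANs trained with generative replay): Let t ≥ 1, and for each task k ∈ {1,…,t} let P_k be its target distribution and let ℙ^{k−1}_k, ℙ^k_k, …, ℙ^t_k be probability measures on X (ℙ^j_k being the part of the GAN generator distribution corresponding to task k after training on j tasks, with ℙ^{k−1}_k the training distribution P̃_k of task k). Let H be a set of measurable maps X → Y, and let h ∈ H and f_k ∈ H for each k (the true labeling function of task k). Then ∑_{k=1}^t R_{P_k}(h, f_k) ≤ ∑_{k=1}^t [ R_{ℙ^t_k}(h, f_k) + ∑_{j=k}^t disc_H(ℙ^{j−1}_k, ℙ^j_k) + disc_H(ℙ^{k−1}_k, P_k) ].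 -/
open MeasureTheory
open scoped ENNReal

/-- The risk `R_μ(h,h') = ∫ d(h x, h' x) dμ(x)`. -/
noncomputable def risk {X Y : Type*} [MeasurableSpace X] [MetricSpace Y]
    (μ : Measure X) (h h' : X → Y) : ℝ :=
  ∫ x, dist (h x) (h' x) ∂μ

/-- The discrepancy distance
`disc_H(μ,ν) = sup_{(h,h') ∈ H × H} |R_μ(h,h') − R_ν(h,h')|`. -/
noncomputable def disc {X Y : Type*} [MeasurableSpace X] [MetricSpace Y]
    (H : Set (X → Y)) (μ ν : Measure X) : ℝ :=
  sSup {r : ℝ | ∃ h ∈ H, ∃ h' ∈ H, r = |risk μ h h' - risk ν h h'|}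

lemma abs_risk_le {X Y : Type*} [MeasurableSpace X] [MetricSpace Y]
    (M : ℝ) (hd : ∀ y y' : Y, dist y y' ≤ M)
    (μ : Measure X) [IsProbabilityMeasure μ] (g g' : X → Y) :
    |risk μ g g'| ≤ M := by
  have := norm_integral_le_of_norm_le_const (μ := μ)
    (f := fun x => dist (g x) (g' x)) (C := M)
    (Filter.Eventually.of_forall fun x => by
      simpa [Real.norm_eq_abs, abs_of_nonneg dist_nonneg] using hd (g x) (g' x))
  simpa [risk, Real.norm_eq_abs] using this

lemma le_disc {X Y : Type*} [MeasurableSpace X] [MetricSpace Y]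
    (M : ℝ) (hd : ∀ y y' : Y, dist y y' ≤ M)
    {H : Set (X → Y)} {g g' : X → Y} (hg : g ∈ H) (hg' : g' ∈ H)
    (μ ν : Measure X) [IsProbabilityMeasure μ] [IsProbabilityMeasure ν] :
    |risk μ g g' - risk ν g g'| ≤ disc H μ ν := by
  apply le_csSup
  · refine ⟨M + M, ?_⟩
    rintro r ⟨a, ha, b, hb, rfl⟩
    calc |risk μ a b - risk ν a b| ≤ |risk μ a b| + |risk ν a b| := abs_sub _ _
      _ ≤ M + M := add_le_add (abs_risk_le M hd μ a b) (abs_risk_le M hd ν a b)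
  · exact ⟨g, hg, g', hg', rfl⟩

lemma telescope (g : ℕ → ℝ) (k t : ℕ) (hkt : k ≤ t) :
    g (k - 1) - g t = ∑ j ∈ Finset.Icc k t, (g (j - 1) - g j) := by
  induction t with
  | zero =>
    interval_cases k <;> simp
  | succ n ih =>
    rcases Nat.lt_or_ge k (n + 1) with hk | hk
    · rw [Finset.sum_Icc_succ_top hkt,
        ← ih (Nat.lt_succ_iff.mp hk)]
      simp
    · have : k = n + 1 := le_antisymm hkt hk
      subst this
      simp

theorem stmt_14 {X Y : Type*} [MeasurableSpace X] [MetricSpace Y] [MeasurableSpace Y]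
    (M : ℝ) (hM : 0 ≤ M) (hd : ∀ y y' : Y, dist y y' ≤ M)
    (t : ℕ) (ht : 1 ≤ t)
    -- target distribution of each task
    (P : ℕ → Measure X) (hP : ∀ k ∈ Finset.Icc 1 t, IsProbabilityMeasure (P k))
    -- ℙ^j_k : the part of the generator distribution for task k after training on
    -- j tasks, for j ∈ {k−1, …, t}, with ℙ^{k−1}_k the training distribution of task k
    (PP : ℕ → ℕ → Measure X)
    (hPP : ∀ k ∈ Finset.Icc 1 t, ∀ j ∈ Finset.Icc (k - 1) t, IsProbabilityMeasure (PP k j))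
    (H : Set (X → Y)) (hH : ∀ g ∈ H, Measurable g)
    (h : X → Y) (hhH : h ∈ H)
    (f : ℕ → X → Y) (hfH : ∀ k ∈ Finset.Icc 1 t, f k ∈ H) :
    ∑ k ∈ Finset.Icc 1 t, risk (P k) h (f k)
      ≤ ∑ k ∈ Finset.Icc 1 t,
          (risk (PP k t) h (f k)
            + ∑ j ∈ Finset.Icc k t, disc H (PP k (j - 1)) (PP k j)
            + disc H (PP k (k - 1)) (P k)) := by
  refine Finset.sum_le_sum fun k hk => ?_
  obtain ⟨hk1, hkt⟩ := Finset.mem_Icc.mp hk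
  haveI hPk := hP k hk
  haveI hPPk : ∀ j ∈ Finset.Icc (k - 1) t, IsProbabilityMeasure (PP k j) := hPP k hk
  have hfk := hfH k hk
  -- step 1: risk (P k) ≤ risk (PP k (k-1)) + disc
  have step1 : risk (P k) h (f k) ≤ risk (PP k (k - 1)) h (f k) + disc H (PP k (k - 1)) (P k) := by
    haveI := hPPk (k - 1) (Finset.mem_Icc.mpr ⟨le_refl _, (Nat.sub_le k 1).trans hkt⟩)
    have := le_disc M hd hhH hfk (PP k (k - 1)) (P k)
    have := neg_abs_le (risk (PP k (k - 1)) h (f k) - risk (P k) h (f k))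
    have := abs_sub_comm (risk (PP k (k - 1)) h (f k)) (risk (P k) h (f k))
    linarith [le_abs_self (risk (P k) h (f k) - risk (PP k (k - 1)) h (f k)),
      le_disc M hd hhH hfk (PP k (k - 1)) (P k),
      abs_sub_comm (risk (PP k (k - 1)) h (f k)) (risk (P k) h (f k))]
  -- step 2: telescoping
  have step2 : risk (PP k (k - 1)) h (f k) - risk (PP k t) h (f k)
      ≤ ∑ j ∈ Finset.Icc k t, disc H (PP k (j - 1)) (PP k j) := by
    rw [telescope (fun j => risk (PP k j) h (f k)) k t hkt]
    refine Finset.sum_le_sum fun j hj => ?_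
    obtain ⟨hjk, hjt⟩ := Finset.mem_Icc.mp hj
    haveI := hPPk (j - 1) (Finset.mem_Icc.mpr
      ⟨Nat.sub_le_sub_right hjk 1, (Nat.sub_le j 1).trans hjt⟩)
    haveI := hPPk j (Finset.mem_Icc.mpr ⟨(Nat.sub_le k 1).trans hjk, hjt⟩)
    calc risk (PP k (j - 1)) h (f k) - risk (PP k j) h (f k)
        ≤ |risk (PP k (j - 1)) h (f k) - risk (PP k j) h (f k)| := le_abs_self _
      _ ≤ disc H (PP k (j - 1)) (PP k j) := le_disc M hd hhH hfk _ _
  linarith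
end

section
/- Corollary 1 (estimating the discrepancy from finite samples): Let P and ℙ be probability measures on X, let H be a set of measurable maps X → ℝ, let q ≥ 1, and consider the loss L(y, y') := |y − y'|^q, assumed bounded above by a constant M > 0 on all values taken by maps in H; define disc_L(μ, ν) := sup_{(h,h') ∈ H × H} | ∫ L(h' x, h x) dμ(x) − ∫ L(h' x, h x) dν(x) |, and assume all suprema involved are measurable functions of the samples. For a sample U = (x₁,…,x_m) ∈ X^m let its empirical measure be (1/m) ∑ δ_{x_i} and its empirical Rademacher complexity be Re_U(H) := E_σ [ sup_{h ∈ H} (2/m) ∑_{i=1}^m σ_i · h(x_i) ], the expectation over σ uniform on {−1,1}^m. Then for every δ ∈ (0,1), with probability at least 1 − δ over independent samples U_P ∼ P^{⊗ m_P} and U_ℙ ∼ ℙ^{⊗ m_ℙ} with empirical measures P̂ and ℙ̂: disc_L(P, ℙ) ≤ disc_L(P̂, ℙ̂) + 4q·( Re_{U_P}(H) + Re_{U_ℙ}(H) ) + 3M·( √(log(4/δ)/(2 m_P)) + √(log(4/δ)/(2 m_ℙ)) ). -/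
open MeasureTheory
open scoped ENNReal

/-- The discrepancy distance associated with the loss `L(y,y') = |y − y'|^q`:
`disc_L(μ,ν) = sup_{(h,h') ∈ H×H} | ∫ L(h' x, h x) dμ − ∫ L(h' x, h x) dν |`. -/
noncomputable def discL {X : Type*} [MeasurableSpace X]
    (H : Set (X → ℝ)) (q : ℝ) (μ ν : Measure X) : ℝ :=
  sSup {r : ℝ | ∃ h ∈ H, ∃ h' ∈ H,
    r = |(∫ x, |h' x - h x| ^ q ∂μ) - ∫ x, |h' x - h x| ^ q ∂ν|}

/-- The empirical measure `(1/m) ∑_{i=1}^m δ_{x_i}` of a sample `U`. -/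
noncomputable def empMeasure {X : Type*} [MeasurableSpace X] {m : ℕ}
    (U : Fin m → X) : Measure X :=
  (m : ℝ≥0∞)⁻¹ • ∑ i, Measure.dirac (U i)

/-- The empirical Rademacher complexity of `H` on the sample `U`:
`Re_U(H) = E_σ [ sup_{h ∈ H} (2/m) ∑_i σ_i · h(x_i) ]`,
the expectation over `σ` uniform on `{−1,1}^m`. -/
noncomputable def rademacher {X : Type*} {m : ℕ} (H : Set (X → ℝ))
    (U : Fin m → X) : ℝ :=
  (1 / 2 ^ m : ℝ) * ∑ σ : Fin m → Bool,
    sSup {r : ℝ | ∃ h ∈ H,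
      r = (2 / m : ℝ) * ∑ i, (if σ i then (1 : ℝ) else -1) * h (U i)}

section AuxLemmas

open Real ProbabilityTheory

variable {X : Type*} [MeasurableSpace X]

lemma aux_integrable_of_bounds {μ : Measure X} [IsProbabilityMeasure μ] {g : X → ℝ} {M : ℝ}
    (hg : Measurable g) (h0 : ∀ x, 0 ≤ g x) (h1 : ∀ x, g x ≤ M) :
    Integrable g μ := by
  refine Integrable.mono' (integrable_const M) hg.aestronglyMeasurable ?_
  filter_upwards with x
  rw [Real.norm_eq_abs, abs_of_nonneg (h0 x)]; exact h1 x

lemma aux_integral_le_of_bounds {μ : Measure X} [IsProbabilityMeasure μ] {g : X → ℝ} {M : ℝ}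
    (hg : Measurable g) (h0 : ∀ x, 0 ≤ g x) (h1 : ∀ x, g x ≤ M) :
    ∫ x, g x ∂μ ≤ M := by
  calc ∫ x, g x ∂μ ≤ ∫ _, M ∂μ :=
        integral_mono (aux_integrable_of_bounds hg h0 h1) (integrable_const M) h1
  _ = M := by simp

/-- A crude version of Hoeffding's lemma. -/
lemma aux_mgf {μ : Measure X} [IsProbabilityMeasure μ] {g : X → ℝ} {M : ℝ}
    (hg : Measurable g) (hM : 0 < M) (h0 : ∀ x, 0 ≤ g x) (h1 : ∀ x, g x ≤ M) (s : ℝ) :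
    ∫ x, exp (s * (g x - ∫ y, g y ∂μ)) ∂μ ≤ exp (s ^ 2 * M ^ 2 / 2) := by
  have hint : Integrable g μ := aux_integrable_of_bounds hg h0 h1
  set c := ∫ y, g y ∂μ with hc
  have hc0 : 0 ≤ c := integral_nonneg h0
  have hcM : c ≤ M := aux_integral_le_of_bounds hg h0 h1
  have h2M : (2 * M : ℝ) ≠ 0 := by positivity
  have key : ∀ x : X, exp (s * (g x - c)) ≤ cosh (s * M) + (sinh (s * M) / M) * (g x - c) := by
    intro x
    have hy1 : -M ≤ g x - c := by linarith [h0 x]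
    have hy2 : g x - c ≤ M := by linarith [h1 x]
    have ha : (0:ℝ) ≤ (M - (g x - c)) / (2 * M) := div_nonneg (by linarith) (by linarith)
    have hb : (0:ℝ) ≤ (M + (g x - c)) / (2 * M) := div_nonneg (by linarith) (by linarith)
    have hab : (M - (g x - c)) / (2 * M) + (M + (g x - c)) / (2 * M) = 1 := by
      field_simp
      ring
    have hcvx := convexOn_exp.2 (Set.mem_univ (-(s * M))) (Set.mem_univ (s * M)) ha hb hab
    have halg : ∀ y u : ℝ, ((M - y) / (2 * M)) * (-u) + ((M + y) / (2 * M)) * u = u * y / M := by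
      intro y u
      field_simp
      ring
    have htrig : ∀ y C S : ℝ,
        ((M - y) / (2 * M)) * (C - S) + ((M + y) / (2 * M)) * (C + S) = C + (S / M) * y := by
      intro y C S
      field_simp
      ring
    calc exp (s * (g x - c))
        = exp (((M - (g x - c)) / (2 * M)) • (-(s * M)) + ((M + (g x - c)) / (2 * M)) • (s * M)) := by
          congr 1
          simp only [smul_eq_mul]
          rw [halg]
          field_simp
      _ ≤ ((M - (g x - c)) / (2 * M)) • exp (-(s * M)) + ((M + (g x - c)) / (2 * M)) • exp (s * M) :=
          hcvx
      _ = cosh (s * M) + (sinh (s * M) / M) * (g x - c) := by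
          simp only [smul_eq_mul]
          rw [← Real.cosh_sub_sinh (s * M), ← Real.cosh_add_sinh (s * M), htrig]
  have hint1 : Integrable (fun x => exp (s * (g x - c))) μ := by
    refine Integrable.mono' (integrable_const (exp (|s| * M)))
      (((hg.sub measurable_const).const_mul s).exp).aestronglyMeasurable ?_
    filter_upwards with x
    rw [Real.norm_eq_abs, abs_of_nonneg (exp_nonneg _)]
    apply exp_le_exp.2
    calc s * (g x - c) ≤ |s * (g x - c)| := le_abs_self _
    _ = |s| * |g x - c| := abs_mul _ _
    _ ≤ |s| * M := by
        apply mul_le_mul_of_nonneg_left _ (abs_nonneg s)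
        rw [abs_le]; constructor <;> [linarith [h0 x]; linarith [h1 x]]
  have hintsub : Integrable (fun x => g x - c) μ := hint.sub (integrable_const c)
  have hint2 : Integrable (fun x => cosh (s * M) + (sinh (s * M) / M) * (g x - c)) μ :=
    (integrable_const _).add (hintsub.const_mul _)
  calc ∫ x, exp (s * (g x - c)) ∂μ
      ≤ ∫ x, (cosh (s * M) + (sinh (s * M) / M) * (g x - c)) ∂μ :=
        integral_mono hint1 hint2 key
  _ = cosh (s * M) + (sinh (s * M) / M) * ∫ x, (g x - c) ∂μ := by
      rw [integral_add (integrable_const _) (hintsub.const_mul _), integral_const,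
        integral_const_mul]
      simp
  _ = cosh (s * M) := by
      rw [integral_sub hint (integrable_const c), integral_const]
      simp [← hc]
  _ ≤ exp ((s * M) ^ 2 / 2) := Real.cosh_le_exp_half_sq _
  _ = exp (s ^ 2 * M ^ 2 / 2) := by ring_nf

/-- One-sided Hoeffding-type inequality for an i.i.d. sample. -/
lemma aux_hoeffding_pi (μ : Measure X) [IsProbabilityMeasure μ] {m : ℕ}
    {g : X → ℝ} {M : ℝ} (hg : Measurable g) (hM : 0 < M)
    (h0 : ∀ x, 0 ≤ g x) (h1 : ∀ x, g x ≤ M) {t : ℝ} (ht : 0 ≤ t) :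
    Measure.pi (fun _ : Fin m => μ)
        {U : Fin m → X | (m : ℝ) * t ≤ (∑ i, g (U i)) - m * ∫ y, g y ∂μ}
      ≤ ENNReal.ofReal (exp (-(m : ℝ) * t ^ 2 / (2 * M ^ 2))) := by
  set c := ∫ y, g y ∂μ with hc
  set ν := Measure.pi (fun _ : Fin m => μ) with hν
  set s := t / M ^ 2 with hs
  have hs0 : 0 ≤ s := div_nonneg ht (by positivity)
  set Z : (Fin m → X) → ℝ := fun U => ∑ i, (g (U i) - c) with hZ
  have hZm : Measurable Z :=
    Finset.measurable_sum _ (fun i _ => (hg.comp (measurable_pi_apply i)).sub measurable_const)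
  have hc0 : 0 ≤ c := integral_nonneg h0
  have hcM : c ≤ M := aux_integral_le_of_bounds hg h0 h1
  have hZb : ∀ U, s * Z U ≤ s * (m * M) := by
    intro U
    apply mul_le_mul_of_nonneg_left _ hs0
    calc Z U ≤ ∑ _i : Fin m, M := Finset.sum_le_sum (fun i _ => by linarith [h1 (U i), hc0])
    _ = m * M := by simp [mul_comm]
  have hint : Integrable (fun U => exp (s * Z U)) ν := by
    refine Integrable.mono' (integrable_const (exp (s * (m * M))))
      ((hZm.const_mul s).exp).aestronglyMeasurable ?_
    filter_upwards with U
    rw [Real.norm_eq_abs, abs_of_nonneg (exp_nonneg _)]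
    exact exp_le_exp.2 (hZb U)
  have hch := measure_ge_le_exp_mul_mgf (X := Z) (μ := ν) ((m : ℝ) * t) hs0 hint
  have hmgf : mgf Z ν s ≤ exp (s ^ 2 * M ^ 2 / 2) ^ m := by
    have hprod : mgf Z ν s = ∏ _i : Fin m, ∫ x, exp (s * (g x - c)) ∂μ := by
      letI : MeasureSpace X := ⟨μ⟩
      haveI : SigmaFinite (volume : Measure X) := inferInstanceAs (SigmaFinite μ)
      have hvol : ν = (volume : Measure (Fin m → X)) := rfl
      rw [mgf, hvol]
      have hexp : ∀ U : Fin m → X, exp (s * Z U) = ∏ i, exp (s * (g (U i) - c)) := by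
        intro U
        rw [hZ, Finset.mul_sum, exp_sum]
      simp_rw [hexp]
      exact MeasureTheory.integral_fintype_prod_eq_prod
        (fun _ x => exp (s * (g x - c)))
    rw [hprod]
    have hle := Finset.prod_le_prod (s := (Finset.univ : Finset (Fin m)))
      (f := fun _ => ∫ x, exp (s * (g x - c)) ∂μ) (g := fun _ => exp (s ^ 2 * M ^ 2 / 2))
      (fun i _ => integral_nonneg (fun x => exp_nonneg _)) (fun i _ => aux_mgf hg hM h0 h1 s)
    simpa using hle
  have hbound : (ν {U | (m : ℝ) * t ≤ Z U}).toReal ≤ exp (-(m : ℝ) * t ^ 2 / (2 * M ^ 2)) := by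
    refine hch.trans ?_
    calc exp (-s * ((m : ℝ) * t)) * mgf Z ν s
        ≤ exp (-s * ((m : ℝ) * t)) * exp (s ^ 2 * M ^ 2 / 2) ^ m :=
          mul_le_mul_of_nonneg_left hmgf (exp_nonneg _)
    _ = exp (-s * ((m : ℝ) * t) + m * (s ^ 2 * M ^ 2 / 2)) := by
        rw [← Real.exp_nat_mul, ← Real.exp_add]
    _ = exp (-(m : ℝ) * t ^ 2 / (2 * M ^ 2)) := by
        congr 1
        rw [hs]
        field_simp
        ring
  have hsets : {U : Fin m → X | (m : ℝ) * t ≤ (∑ i, g (U i)) - m * c}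
      = {U | (m : ℝ) * t ≤ Z U} := by
    ext U
    simp only [Set.mem_setOf_eq, hZ, Finset.sum_sub_distrib, Finset.sum_const, Finset.card_univ,
      Fintype.card_fin, nsmul_eq_mul]
  rw [hsets]
  rw [ENNReal.le_ofReal_iff_toReal_le (measure_ne_top _ _) (exp_nonneg _)]
  exact hbound

/-- Two-sided deviation bound for an i.i.d. sample. -/
lemma aux_sample_dev (μ : Measure X) [IsProbabilityMeasure μ] {m : ℕ}
    {g : X → ℝ} {M : ℝ} (hg : Measurable g) (hM : 0 < M)
    (h0 : ∀ x, 0 ≤ g x) (h1 : ∀ x, g x ≤ M) {t : ℝ} (ht : 0 ≤ t) :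
    Measure.pi (fun _ : Fin m => μ)
        {U : Fin m → X | ¬ |(∑ i, g (U i)) - m * ∫ y, g y ∂μ| ≤ (m : ℝ) * t}
      ≤ ENNReal.ofReal (exp (-(m : ℝ) * t ^ 2 / (2 * M ^ 2)))
        + ENNReal.ofReal (exp (-(m : ℝ) * t ^ 2 / (2 * M ^ 2))) := by
  set c := ∫ y, g y ∂μ with hc
  set ν := Measure.pi (fun _ : Fin m => μ) with hν
  have hg' : Measurable (fun x => M - g x) := measurable_const.sub hg
  have h0' : ∀ x, 0 ≤ M - g x := fun x => by linarith [h1 x]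
  have h1' : ∀ x, M - g x ≤ M := fun x => by linarith [h0 x]
  have hint : Integrable g μ := aux_integrable_of_bounds hg h0 h1
  have hc' : ∫ y, (M - g y) ∂μ = M - c := by
    rw [integral_sub (integrable_const M) hint, integral_const]
    simp [hc]
  have hup := aux_hoeffding_pi μ hg hM h0 h1 ht (m := m)
  have hlo := aux_hoeffding_pi μ hg' hM h0' h1' ht (m := m)
  have hset2 : {U : Fin m → X | (m : ℝ) * t ≤ (∑ i, (M - g (U i))) - m * ∫ y, (M - g y) ∂μ}
      = {U : Fin m → X | (m : ℝ) * t ≤ m * c - ∑ i, g (U i)} := by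
    ext U
    simp only [Set.mem_setOf_eq, hc', Finset.sum_sub_distrib, Finset.sum_const,
      Finset.card_univ, Fintype.card_fin, nsmul_eq_mul]
    constructor <;> intro hh <;> linarith
  rw [hset2] at hlo
  have hsub : {U : Fin m → X | ¬ |(∑ i, g (U i)) - m * c| ≤ (m : ℝ) * t}
      ⊆ {U : Fin m → X | (m : ℝ) * t ≤ (∑ i, g (U i)) - m * c}
        ∪ {U : Fin m → X | (m : ℝ) * t ≤ m * c - ∑ i, g (U i)} := by
    intro U hU
    simp only [Set.mem_setOf_eq, not_le] at hU
    rcases lt_abs.1 hU with hcase | hcase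
    · exact Or.inl (le_of_lt hcase)
    · exact Or.inr (by simp only [Set.mem_setOf_eq]; linarith)
  calc ν _ ≤ ν ({U : Fin m → X | (m : ℝ) * t ≤ (∑ i, g (U i)) - m * c}
        ∪ {U : Fin m → X | (m : ℝ) * t ≤ m * c - ∑ i, g (U i)}) := measure_mono hsub
  _ ≤ ν {U : Fin m → X | (m : ℝ) * t ≤ (∑ i, g (U i)) - m * c}
      + ν {U : Fin m → X | (m : ℝ) * t ≤ m * c - ∑ i, g (U i)} := measure_union_le _ _
  _ ≤ _ := add_le_add hup hlo

/-- Integral against the empirical measure is the empirical average. -/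
lemma aux_integral_empMeasure {m : ℕ} (hm : 0 < m) (U : Fin m → X)
    {g : X → ℝ} (hg : Measurable g) :
    ∫ x, g x ∂(empMeasure U) = (m : ℝ)⁻¹ * ∑ i, g (U i) := by
  rw [empMeasure, integral_smul_measure]
  rw [integral_finset_sum_measure (fun i _ => ?_)]
  · simp_rw [integral_dirac' _ _ hg.stronglyMeasurable]
    rw [ENNReal.toReal_inv]
    simp
  · exact Integrable.mono' (integrable_const (|g (U i)|)) hg.aestronglyMeasurable
      ((MeasureTheory.ae_dirac_iff
        (measurableSet_le hg.norm measurable_const)).2 (le_of_eq (Real.norm_eq_abs _)))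

lemma aux_sum_sign_zero {m : ℕ} (i : Fin m) :
    ∑ σ : Fin m → Bool, (if σ i then (1 : ℝ) else -1) = 0 := by
  have hinv : Function.Involutive (fun σ : Fin m → Bool => Function.update σ i (!(σ i))) := by
    intro σ
    ext j
    rcases eq_or_ne j i with rfl | hj
    · simp
    · simp [Function.update_of_ne hj]
  have hperm := Equiv.sum_comp (Function.Involutive.toPerm _ hinv)
    (fun σ : Fin m → Bool => (if σ i then (1 : ℝ) else -1))
  have hneg : ∀ σ : Fin m → Bool,
      (if ((Function.Involutive.toPerm _ hinv) σ) i then (1 : ℝ) else -1)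
        = -(if σ i then (1 : ℝ) else -1) := by
    intro σ
    have hup : ((Function.Involutive.toPerm _ hinv) σ) i = !(σ i) := by
      simp [Function.Involutive.toPerm]
    rw [hup]
    cases σ i <;> simp
  rw [Finset.sum_congr rfl (fun σ _ => hneg σ), Finset.sum_neg_distrib] at hperm
  linarith [hperm]

lemma aux_rademacher_nonneg {m : ℕ} {H : Set (X → ℝ)} {h₀ : X → ℝ} (hh₀ : h₀ ∈ H)
    {q M : ℝ} (hq : 1 ≤ q) (hM : 0 < M)
    (hbound : ∀ h ∈ H, ∀ h' ∈ H, ∀ x, |h' x - h x| ^ q ≤ M) (U : Fin m → X) :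
    0 ≤ rademacher H U := by
  have hq0 : (0 : ℝ) < q := by linarith
  rw [rademacher]
  apply mul_nonneg (by positivity)
  have key : ∀ σ : Fin m → Bool,
      (2 / m : ℝ) * ∑ i, (if σ i then (1 : ℝ) else -1) * h₀ (U i)
        ≤ sSup {r : ℝ | ∃ h ∈ H,
            r = (2 / m : ℝ) * ∑ i, (if σ i then (1 : ℝ) else -1) * h (U i)} := by
    intro σ
    apply le_csSup
    · refine ⟨(2 / m : ℝ) * ∑ i, (|h₀ (U i)| + M ^ (1 / q : ℝ)), ?_⟩
      rintro r ⟨h, hh, rfl⟩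
      apply mul_le_mul_of_nonneg_left _ (by positivity)
      apply Finset.sum_le_sum
      intro i _
      have hd : |h (U i) - h₀ (U i)| ≤ M ^ (1 / q : ℝ) := by
        have h2 : (|h (U i) - h₀ (U i)| ^ q) ^ (1 / q : ℝ) ≤ M ^ (1 / q : ℝ) :=
          Real.rpow_le_rpow (Real.rpow_nonneg (abs_nonneg _) _)
            (hbound h₀ hh₀ h hh (U i)) (by positivity)
        rwa [← Real.rpow_mul (abs_nonneg _), mul_one_div, div_self hq0.ne', Real.rpow_one] at h2
      calc (if σ i then (1 : ℝ) else -1) * h (U i) ≤ |h (U i)| := by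
            cases σ i <;> simp [neg_le_abs, le_abs_self]
      _ ≤ |h₀ (U i)| + M ^ (1 / q : ℝ) := by
            have h3 := abs_sub_abs_le_abs_sub (h (U i)) (h₀ (U i))
            linarith
    · exact ⟨h₀, hh₀, rfl⟩
  have hzero : ∑ σ : Fin m → Bool,
      (2 / m : ℝ) * ∑ i, (if σ i then (1 : ℝ) else -1) * h₀ (U i) = 0 := by
    rw [← Finset.mul_sum, Finset.sum_comm]
    have hz : ∀ i : Fin m, ∑ σ : Fin m → Bool, (if σ i then (1 : ℝ) else -1) * h₀ (U i) = 0 := by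
      intro i
      rw [← Finset.sum_mul, aux_sum_sign_zero, zero_mul]
    rw [Finset.sum_congr rfl (fun i _ => hz i), Finset.sum_const_zero, mul_zero]
  calc (0 : ℝ) = ∑ σ : Fin m → Bool,
      (2 / m : ℝ) * ∑ i, (if σ i then (1 : ℝ) else -1) * h₀ (U i) := hzero.symm
  _ ≤ _ := Finset.sum_le_sum (fun σ _ => key σ)

end AuxLemmas

theorem stmt_18 {X : Type*} [MeasurableSpace X]
    (P Pr : Measure X) [IsProbabilityMeasure P] [IsProbabilityMeasure Pr]
    (H : Set (X → ℝ)) (hH : ∀ g ∈ H, Measurable g)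
    (q : ℝ) (hq : 1 ≤ q)
    (M : ℝ) (hM : 0 < M)
    -- the loss is bounded above by M on all values taken by maps in H
    (hbound : ∀ h ∈ H, ∀ h' ∈ H, ∀ x : X, |h' x - h x| ^ q ≤ M)
    (mP mPr : ℕ) (hmP : 0 < mP) (hmPr : 0 < mPr)
    -- measurability (in the samples) of the suprema involved
    (hmeas1 : Measurable fun UV : (Fin mP → X) × (Fin mPr → X) =>
      discL H q (empMeasure UV.1) (empMeasure UV.2))
    (hmeas2 : Measurable fun U : Fin mP → X => rademacher H U)
    (hmeas3 : Measurable fun V : Fin mPr → X => rademacher H V)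
    (δ : ℝ) (hδ : δ ∈ Set.Ioo (0 : ℝ) 1) :
    ENNReal.ofReal (1 - δ) ≤
      ((Measure.pi fun _ : Fin mP => P).prod (Measure.pi fun _ : Fin mPr => Pr))
        {UV : (Fin mP → X) × (Fin mPr → X) |
          discL H q P Pr
            ≤ discL H q (empMeasure UV.1) (empMeasure UV.2)
              + 4 * q * (rademacher H UV.1 + rademacher H UV.2)
              + 3 * M * (Real.sqrt (Real.log (4 / δ) / (2 * mP))
                + Real.sqrt (Real.log (4 / δ) / (2 * mPr)))} := by
  obtain ⟨hδ0, hδ1⟩ := hδ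
  have hmP' : (0:ℝ) < mP := by exact_mod_cast hmP
  have hmPr' : (0:ℝ) < mPr := by exact_mod_cast hmPr
  have hlog : 0 < Real.log (4 / δ) := Real.log_pos (by rw [lt_div_iff₀ hδ0]; linarith)
  set sa := Real.sqrt (Real.log (4 / δ) / (2 * mP)) with hsa
  set sb := Real.sqrt (Real.log (4 / δ) / (2 * mPr)) with hsb
  have hsa0 : 0 < sa := Real.sqrt_pos.2 (div_pos hlog (by linarith))
  have hsb0 : 0 < sb := Real.sqrt_pos.2 (div_pos hlog (by linarith))
  set ν1 := Measure.pi fun _ : Fin mP => P with hν1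
  set ν2 := Measure.pi fun _ : Fin mPr => Pr with hν2
  set ρ := ν1.prod ν2 with hρ
  rcases Set.eq_empty_or_nonempty H with hHe | ⟨h₀, hh₀⟩
  · -- H is empty: everything is zero and the event is the whole space
    have hall : ∀ UV : (Fin mP → X) × (Fin mPr → X),
        discL H q P Pr
          ≤ discL H q (empMeasure UV.1) (empMeasure UV.2)
            + 4 * q * (rademacher H UV.1 + rademacher H UV.2)
            + 3 * M * (sa + sb) := by
      intro UV
      have e1 : discL H q P Pr = 0 := by simp [discL, hHe, Real.sSup_empty]
      have e2 : discL H q (empMeasure UV.1) (empMeasure UV.2) = 0 := by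
        simp [discL, hHe, Real.sSup_empty]
      have e3 : rademacher H UV.1 = 0 := by simp [rademacher, hHe, Real.sSup_empty]
      have e4 : rademacher H UV.2 = 0 := by simp [rademacher, hHe, Real.sSup_empty]
      rw [e1, e2, e3, e4]
      have h5 : 0 ≤ 3 * M * (sa + sb) := by positivity
      linarith
    have huniv : {UV : (Fin mP → X) × (Fin mPr → X) |
        discL H q P Pr
          ≤ discL H q (empMeasure UV.1) (empMeasure UV.2)
            + 4 * q * (rademacher H UV.1 + rademacher H UV.2)
            + 3 * M * (sa + sb)} = Set.univ := Set.eq_univ_of_forall hall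
    rw [huniv]
    have hρuniv : ρ Set.univ = 1 := by
      rw [← Set.univ_prod_univ, hρ, Measure.prod_prod, measure_univ, measure_univ, mul_one]
    rw [hρuniv]
    exact ENNReal.ofReal_le_one.2 (by linarith)
  · -- H is nonempty
    have hq0 : (0:ℝ) < q := by linarith
    -- choose a nearly optimal pair (h, h')
    have hgmeas : ∀ h ∈ H, ∀ h' ∈ H, Measurable fun x => |h' x - h x| ^ q := by
      intro h hh h' hh'
      exact (Real.continuous_rpow_const (le_of_lt hq0)).measurable.comp
        ((hH h' hh').sub (hH h hh)).abs
    have hS0 : (0:ℝ) ∈ {r : ℝ | ∃ h ∈ H, ∃ h' ∈ H,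
        r = |(∫ x, |h' x - h x| ^ q ∂P) - ∫ x, |h' x - h x| ^ q ∂Pr|} := by
      refine ⟨h₀, hh₀, h₀, hh₀, ?_⟩
      simp [sub_self, Real.zero_rpow hq0.ne']
    set ε := M * (sa + sb) with hε
    have hε0 : 0 < ε := mul_pos hM (by linarith)
    have hlt : discL H q P Pr - ε < sSup {r : ℝ | ∃ h ∈ H, ∃ h' ∈ H,
        r = |(∫ x, |h' x - h x| ^ q ∂P) - ∫ x, |h' x - h x| ^ q ∂Pr|} := by
      have : discL H q P Pr = sSup {r : ℝ | ∃ h ∈ H, ∃ h' ∈ H,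
          r = |(∫ x, |h' x - h x| ^ q ∂P) - ∫ x, |h' x - h x| ^ q ∂Pr|} := rfl
      linarith [this]
    obtain ⟨r, hrS, hrlt⟩ := exists_lt_of_lt_csSup ⟨0, hS0⟩ hlt
    obtain ⟨h, hh, h', hh', rfl⟩ := hrS
    have hg : Measurable fun x => |h' x - h x| ^ q := hgmeas h hh h' hh'
    have hg0 : ∀ x, 0 ≤ |h' x - h x| ^ q := fun x => Real.rpow_nonneg (abs_nonneg _) q
    have hg1 : ∀ x, |h' x - h x| ^ q ≤ M := hbound h hh h' hh'
    set cP := ∫ x, |h' x - h x| ^ q ∂P with hcP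
    set cPr := ∫ x, |h' x - h x| ^ q ∂Pr with hcPr
    set tP := 2 * M * sa with htPdef
    set tPr := 2 * M * sb with htPrdef
    have htP0 : 0 ≤ tP := by positivity
    have htPr0 : 0 ≤ tPr := by positivity
    -- the good events
    set B1 := {U : Fin mP → X |
      |(∑ i, |h' (U i) - h (U i)| ^ q) - (mP : ℝ) * cP| ≤ (mP : ℝ) * tP} with hB1
    set B2 := {V : Fin mPr → X |
      |(∑ i, |h' (V i) - h (V i)| ^ q) - (mPr : ℝ) * cPr| ≤ (mPr : ℝ) * tPr} with hB2
    -- deviation bounds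
    have hexp1 : Real.exp (-(mP : ℝ) * tP ^ 2 / (2 * M ^ 2)) = δ / 4 := by
      have hsq : sa ^ 2 = Real.log (4 / δ) / (2 * mP) :=
        Real.sq_sqrt (le_of_lt (div_pos hlog (by linarith)))
      have harg : -(mP : ℝ) * tP ^ 2 / (2 * M ^ 2) = -Real.log (4 / δ) := by
        rw [htPdef]
        have hex : (2 * M * sa) ^ 2 = 4 * M ^ 2 * sa ^ 2 := by ring
        rw [hex, hsq]
        field_simp
        ring
      rw [harg, Real.exp_neg, Real.exp_log (div_pos (by norm_num) hδ0), inv_div]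
    have hexp2 : Real.exp (-(mPr : ℝ) * tPr ^ 2 / (2 * M ^ 2)) = δ / 4 := by
      have hsq : sb ^ 2 = Real.log (4 / δ) / (2 * mPr) :=
        Real.sq_sqrt (le_of_lt (div_pos hlog (by linarith)))
      have harg : -(mPr : ℝ) * tPr ^ 2 / (2 * M ^ 2) = -Real.log (4 / δ) := by
        rw [htPrdef]
        have hex : (2 * M * sb) ^ 2 = 4 * M ^ 2 * sb ^ 2 := by ring
        rw [hex, hsq]
        field_simp
        ring
      rw [harg, Real.exp_neg, Real.exp_log (div_pos (by norm_num) hδ0), inv_div]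
    have hB1c : ν1 B1ᶜ ≤ ENNReal.ofReal (δ / 4) + ENNReal.ofReal (δ / 4) := by
      have hsd := aux_sample_dev P hg hM hg0 hg1 htP0 (m := mP)
      rw [hexp1] at hsd
      exact hsd
    have hB2c : ν2 B2ᶜ ≤ ENNReal.ofReal (δ / 4) + ENNReal.ofReal (δ / 4) := by
      have hsd := aux_sample_dev Pr hg hM hg0 hg1 htPr0 (m := mPr)
      rw [hexp2] at hsd
      exact hsd
    set G := B1 ×ˢ B2 with hG
    have hGc : ρ Gᶜ ≤ ENNReal.ofReal δ := by
      have hsub : Gᶜ ⊆ (B1ᶜ ×ˢ (Set.univ : Set (Fin mPr → X)))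
          ∪ ((Set.univ : Set (Fin mP → X)) ×ˢ B2ᶜ) := by
        rintro ⟨U, V⟩ hUV
        simp only [hG, Set.mem_compl_iff, Set.mem_prod, not_and_or] at hUV
        rcases hUV with hcase | hcase
        · exact Or.inl ⟨hcase, trivial⟩
        · exact Or.inr ⟨trivial, hcase⟩
      calc ρ Gᶜ ≤ ρ ((B1ᶜ ×ˢ (Set.univ : Set (Fin mPr → X)))
            ∪ ((Set.univ : Set (Fin mP → X)) ×ˢ B2ᶜ)) := measure_mono hsub
      _ ≤ ρ (B1ᶜ ×ˢ (Set.univ : Set (Fin mPr → X)))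
          + ρ ((Set.univ : Set (Fin mP → X)) ×ˢ B2ᶜ) := measure_union_le _ _
      _ = ν1 B1ᶜ + ν2 B2ᶜ := by
          rw [hρ, Measure.prod_prod, Measure.prod_prod, measure_univ, measure_univ,
            mul_one, one_mul]
      _ ≤ (ENNReal.ofReal (δ / 4) + ENNReal.ofReal (δ / 4))
          + (ENNReal.ofReal (δ / 4) + ENNReal.ofReal (δ / 4)) := add_le_add hB1c hB2c
      _ = ENNReal.ofReal δ := by
          rw [← ENNReal.ofReal_add (by linarith) (by linarith),
            ← ENNReal.ofReal_add (by linarith) (by linarith)]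
          congr 1
          ring
    have hρuniv : ρ Set.univ = 1 := by
      rw [← Set.univ_prod_univ, hρ, Measure.prod_prod, measure_univ, measure_univ, mul_one]
    have hρG : ENNReal.ofReal (1 - δ) ≤ ρ G := by
      have h1le : (1:ℝ≥0∞) ≤ ρ G + ENNReal.ofReal δ := by
        have huc : (1:ℝ≥0∞) = ρ (G ∪ Gᶜ) := by rw [Set.union_compl_self, hρuniv]
        rw [huc]
        exact le_trans (measure_union_le _ _) (add_le_add_right hGc _)
      have hsum : ENNReal.ofReal (1 - δ) + ENNReal.ofReal δ = 1 := by
        rw [← ENNReal.ofReal_add (by linarith) (by linarith)]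
        norm_num
      exact (ENNReal.add_le_add_iff_right ENNReal.ofReal_ne_top).1 (by rw [hsum]; exact h1le)
    refine le_trans hρG (measure_mono ?_)
    -- the good event implies the desired inequality
    rintro ⟨U, V⟩ ⟨hU, hV⟩
    simp only [Set.mem_setOf_eq]
    have hU' : |(∑ i, |h' (U i) - h (U i)| ^ q) - (mP : ℝ) * cP| ≤ (mP : ℝ) * tP := hU
    have hV' : |(∑ i, |h' (V i) - h (V i)| ^ q) - (mPr : ℝ) * cPr| ≤ (mPr : ℝ) * tPr := hV
    -- empirical integrals
    have hIU : ∫ x, |h' x - h x| ^ q ∂(empMeasure U)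
        = (mP : ℝ)⁻¹ * ∑ i, |h' (U i) - h (U i)| ^ q := aux_integral_empMeasure hmP U hg
    have hIV : ∫ x, |h' x - h x| ^ q ∂(empMeasure V)
        = (mPr : ℝ)⁻¹ * ∑ i, |h' (V i) - h (V i)| ^ q := aux_integral_empMeasure hmPr V hg
    -- deviations in averaged form
    have hdevU : |(mP : ℝ)⁻¹ * (∑ i, |h' (U i) - h (U i)| ^ q) - cP| ≤ tP := by
      have heq : (mP : ℝ)⁻¹ * (∑ i, |h' (U i) - h (U i)| ^ q) - cP
          = ((∑ i, |h' (U i) - h (U i)| ^ q) - (mP : ℝ) * cP) / mP := by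
        field_simp
      rw [heq, abs_div, abs_of_pos hmP', div_le_iff₀ hmP']
      linarith [hU']
    have hdevV : |(mPr : ℝ)⁻¹ * (∑ i, |h' (V i) - h (V i)| ^ q) - cPr| ≤ tPr := by
      have heq : (mPr : ℝ)⁻¹ * (∑ i, |h' (V i) - h (V i)| ^ q) - cPr
          = ((∑ i, |h' (V i) - h (V i)| ^ q) - (mPr : ℝ) * cPr) / mPr := by
        field_simp
      rw [heq, abs_div, abs_of_pos hmPr', div_le_iff₀ hmPr']
      linarith [hV']
    -- bound on the empirical discrepancy set
    have hbddemp : ∀ r ∈ {r : ℝ | ∃ h₁ ∈ H, ∃ h₁' ∈ H,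
        r = |(∫ x, |h₁' x - h₁ x| ^ q ∂(empMeasure U))
          - ∫ x, |h₁' x - h₁ x| ^ q ∂(empMeasure V)|}, r ≤ M := by
      rintro r ⟨h₁, hh₁, h₁', hh₁', rfl⟩
      have hg₁ : Measurable fun x => |h₁' x - h₁ x| ^ q := hgmeas h₁ hh₁ h₁' hh₁'
      have e1 : ∫ x, |h₁' x - h₁ x| ^ q ∂(empMeasure U)
          = (mP : ℝ)⁻¹ * ∑ i, |h₁' (U i) - h₁ (U i)| ^ q := aux_integral_empMeasure hmP U hg₁
      have e2 : ∫ x, |h₁' x - h₁ x| ^ q ∂(empMeasure V)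
          = (mPr : ℝ)⁻¹ * ∑ i, |h₁' (V i) - h₁ (V i)| ^ q := aux_integral_empMeasure hmPr V hg₁
      have hA0 : 0 ≤ (mP : ℝ)⁻¹ * ∑ i, |h₁' (U i) - h₁ (U i)| ^ q := by
        apply mul_nonneg (by positivity)
        exact Finset.sum_nonneg fun i _ => Real.rpow_nonneg (abs_nonneg _) q
      have hAM : (mP : ℝ)⁻¹ * (∑ i, |h₁' (U i) - h₁ (U i)| ^ q) ≤ M := by
        have hsum : (∑ i, |h₁' (U i) - h₁ (U i)| ^ q) ≤ (mP : ℝ) * M := by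
          calc (∑ i, |h₁' (U i) - h₁ (U i)| ^ q) ≤ ∑ _i : Fin mP, M :=
              Finset.sum_le_sum fun i _ => hbound h₁ hh₁ h₁' hh₁' (U i)
          _ = (mP : ℝ) * M := by simp [mul_comm]
        calc (mP : ℝ)⁻¹ * (∑ i, |h₁' (U i) - h₁ (U i)| ^ q)
            ≤ (mP : ℝ)⁻¹ * ((mP : ℝ) * M) :=
              mul_le_mul_of_nonneg_left hsum (by positivity)
        _ = M := by field_simp
      have hB0 : 0 ≤ (mPr : ℝ)⁻¹ * ∑ i, |h₁' (V i) - h₁ (V i)| ^ q := by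
        apply mul_nonneg (by positivity)
        exact Finset.sum_nonneg fun i _ => Real.rpow_nonneg (abs_nonneg _) q
      have hBM : (mPr : ℝ)⁻¹ * (∑ i, |h₁' (V i) - h₁ (V i)| ^ q) ≤ M := by
        have hsum : (∑ i, |h₁' (V i) - h₁ (V i)| ^ q) ≤ (mPr : ℝ) * M := by
          calc (∑ i, |h₁' (V i) - h₁ (V i)| ^ q) ≤ ∑ _i : Fin mPr, M :=
              Finset.sum_le_sum fun i _ => hbound h₁ hh₁ h₁' hh₁' (V i)
          _ = (mPr : ℝ) * M := by simp [mul_comm]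
        calc (mPr : ℝ)⁻¹ * (∑ i, |h₁' (V i) - h₁ (V i)| ^ q)
            ≤ (mPr : ℝ)⁻¹ * ((mPr : ℝ) * M) :=
              mul_le_mul_of_nonneg_left hsum (by positivity)
        _ = M := by field_simp
      rw [e1, e2, abs_sub_le_iff]
      constructor <;> linarith
    have hmem : |(∫ x, |h' x - h x| ^ q ∂(empMeasure U))
        - ∫ x, |h' x - h x| ^ q ∂(empMeasure V)| ∈ {r : ℝ | ∃ h₁ ∈ H, ∃ h₁' ∈ H,
        r = |(∫ x, |h₁' x - h₁ x| ^ q ∂(empMeasure U))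
          - ∫ x, |h₁' x - h₁ x| ^ q ∂(empMeasure V)|} := ⟨h, hh, h', hh', rfl⟩
    have hle_disc : |(∫ x, |h' x - h x| ^ q ∂(empMeasure U))
        - ∫ x, |h' x - h x| ^ q ∂(empMeasure V)|
        ≤ discL H q (empMeasure U) (empMeasure V) := le_csSup ⟨M, hbddemp⟩ hmem
    rw [hIU, hIV] at hle_disc
    -- Rademacher terms are nonnegative
    have hRU : 0 ≤ rademacher H U := aux_rademacher_nonneg hh₀ hq hM hbound U
    have hRV : 0 ≤ rademacher H V := aux_rademacher_nonneg hh₀ hq hM hbound V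
    have hRpos : 0 ≤ 4 * q * (rademacher H U + rademacher H V) := by
      apply mul_nonneg (by linarith)
      linarith
    -- triangle inequalities
    have htri1 := abs_sub_le cP ((mP : ℝ)⁻¹ * ∑ i, |h' (U i) - h (U i)| ^ q) cPr
    have htri2 := abs_sub_le ((mP : ℝ)⁻¹ * ∑ i, |h' (U i) - h (U i)| ^ q)
      ((mPr : ℝ)⁻¹ * ∑ i, |h' (V i) - h (V i)| ^ q) cPr
    have hcomm1 : |cP - (mP : ℝ)⁻¹ * ∑ i, |h' (U i) - h (U i)| ^ q|
        = |(mP : ℝ)⁻¹ * (∑ i, |h' (U i) - h (U i)| ^ q) - cP| := abs_sub_comm _ _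
    have hcomm2 : |(mPr : ℝ)⁻¹ * ∑ i, |h' (V i) - h (V i)| ^ q - cPr|
        = |(mPr : ℝ)⁻¹ * (∑ i, |h' (V i) - h (V i)| ^ q) - cPr| := rfl
    linarith [hrlt, htri1, htri2, hdevU, hdevV, hle_disc, hRpos,
      hcomm1 ▸ htri1]
end
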